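/- Consider the linearly constrained problem: minimize Σ_{i=1}^N f_i(x_i) subject to x_i ∈ X_i and Σ_{i=1}^N A_i x_i = b, with Lagrangian L(x, λ) = Σ_i f_i(x_i) + λᵀ(Σ_i A_i x_i − b). Let (x*, λ*) be a saddle point of L (so in particular Σ_i A_i x*_i = b). Let λ⁰ ∈ ℝ^m, ρ > 0, K ≥ 1 an integer, and let x̄_i ∈ X_i be points such that for every λ ∈ ℝ^m: Σ_i f_i(x̄_i) − Σ_i f_i(x*_i) + λᵀ(Σ_i A_i x̄_i − b) ≤ ‖λ⁰ − λ‖₂²/(2ρK). Then, with C₁ = (1/(2ρ))·(‖λ⁰ − λ*‖₂ + 1)² and C₂ = ‖λ⁰ − λ*‖₂²/(2ρ), it holds that ‖Σ_i A_i x̄_i − b‖₂ ≤ C₁/K and |Σ_i f_i(x̄_i) − Σ_i f_i(x*_i)| ≤ (‖λ*‖₂·C₁ + C₂)/K. -/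

import Mathlib

open scoped BigOperators

/-- The Lagrangian of the linearly constrained problem:
`L(x, λ) = Σᵢ fᵢ(xᵢ) + λᵀ(Σᵢ Aᵢ xᵢ − b)`. -/
noncomputable def lagrangianLin {N m : ℕ} {n : Fin N → ℕ}
    (f : ∀ i, EuclideanSpace ℝ (Fin (n i)) → ℝ)
    (A : ∀ i, EuclideanSpace ℝ (Fin (n i)) →L[ℝ] EuclideanSpace ℝ (Fin m))
    (b : EuclideanSpace ℝ (Fin m))
    (x : ∀ i, EuclideanSpace ℝ (Fin (n i)))
    (lam : EuclideanSpace ℝ (Fin m)) : ℝ :=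
  (∑ i, f i (x i)) + (inner ℝ lam ((∑ i, A i (x i)) - b) : ℝ)

/-- from the averaged saddle-type bound to the sublinear rates on the
objective gap and the feasibility residual. -/
theorem stmt_13 {N m : ℕ} {n : Fin N → ℕ}
    (f : ∀ i, EuclideanSpace ℝ (Fin (n i)) → ℝ)
    (A : ∀ i, EuclideanSpace ℝ (Fin (n i)) →L[ℝ] EuclideanSpace ℝ (Fin m))
    (b : EuclideanSpace ℝ (Fin m))
    (X : ∀ i, Set (EuclideanSpace ℝ (Fin (n i))))
    (hX : ∀ i, IsClosed (X i) ∧ Convex ℝ (X i))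
    (hf : ∀ i, Continuous (f i) ∧ ConvexOn ℝ Set.univ (f i))
    (xs : ∀ i, EuclideanSpace ℝ (Fin (n i))) (ls : EuclideanSpace ℝ (Fin m))
    (hxs : ∀ i, xs i ∈ X i)
    (hsaddle1 : ∀ lam : EuclideanSpace ℝ (Fin m),
      lagrangianLin f A b xs lam ≤ lagrangianLin f A b xs ls)
    (hsaddle2 : ∀ x : ∀ i, EuclideanSpace ℝ (Fin (n i)), (∀ i, x i ∈ X i) →
      lagrangianLin f A b xs ls ≤ lagrangianLin f A b x ls)
    (lam0 : EuclideanSpace ℝ (Fin m)) (ρ : ℝ) (hρ : 0 < ρ) (K : ℕ) (hK : 1 ≤ K)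
    (xbar : ∀ i, EuclideanSpace ℝ (Fin (n i))) (hxbarmem : ∀ i, xbar i ∈ X i)
    (hxbar : ∀ lam : EuclideanSpace ℝ (Fin m),
      (∑ i, f i (xbar i)) - (∑ i, f i (xs i))
          + (inner ℝ lam ((∑ i, A i (xbar i)) - b) : ℝ)
        ≤ ‖lam0 - lam‖ ^ 2 / (2 * ρ * K)) :
    ‖(∑ i, A i (xbar i)) - b‖ ≤ (1 / (2 * ρ) * (‖lam0 - ls‖ + 1) ^ 2) / K ∧
    |(∑ i, f i (xbar i)) - ∑ i, f i (xs i)|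
      ≤ (‖ls‖ * (1 / (2 * ρ) * (‖lam0 - ls‖ + 1) ^ 2) + ‖lam0 - ls‖ ^ 2 / (2 * ρ)) / K := by
  have hKpos : (0:ℝ) < K := by exact_mod_cast Nat.lt_of_lt_of_le Nat.zero_lt_one hK
  set r : EuclideanSpace ℝ (Fin m) := (∑ i, A i (xbar i)) - b with hr
  set Δ : ℝ := (∑ i, f i (xbar i)) - (∑ i, f i (xs i)) with hΔ
  set v : EuclideanSpace ℝ (Fin m) := (∑ i, A i (xs i)) - b with hv
  have hv0 : v = 0 := by
    have h := hsaddle1 (ls + v)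
    simp only [lagrangianLin, inner_add_left, ← hv] at h
    have h1 : (inner ℝ v v : ℝ) ≤ 0 := by linarith
    exact inner_self_eq_zero.1 (le_antisymm h1 real_inner_self_nonneg)
  have h0 : 0 ≤ Δ + (inner ℝ ls r : ℝ) := by
    have h := hsaddle2 xbar hxbarmem
    simp only [lagrangianLin, ← hv, ← hr, hv0, inner_zero_right] at h
    simp only [hΔ]; linarith
  have hρK : (0:ℝ) < 2 * ρ * K := by positivity
  have heq : (‖lam0 - ls‖ + 1) ^ 2 / (2 * ρ * K)
      = 1 / (2 * ρ) * (‖lam0 - ls‖ + 1) ^ 2 / K := by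
    field_simp
  have hC1 : ‖r‖ ≤ (1 / (2 * ρ) * (‖lam0 - ls‖ + 1) ^ 2) / K := by
    rw [← heq]
    rcases eq_or_ne r 0 with h | h
    · rw [h, norm_zero]; positivity
    · set u : EuclideanSpace ℝ (Fin m) := ‖r‖⁻¹ • r with hu
      have hrne : (‖r‖ : ℝ) ≠ 0 := norm_ne_zero_iff.2 h
      have hun : ‖u‖ = 1 := by
        rw [hu, norm_smul, norm_inv, norm_norm, inv_mul_cancel₀ hrne]
      have hur : (inner ℝ u r : ℝ) = ‖r‖ := by
        rw [hu, real_inner_smul_left, real_inner_self_eq_norm_sq, sq,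
          ← mul_assoc, inv_mul_cancel₀ hrne, one_mul]
      have h1 := hxbar (ls + u)
      rw [inner_add_left, hur] at h1
      have hnorm : ‖lam0 - (ls + u)‖ ≤ ‖lam0 - ls‖ + 1 := by
        calc ‖lam0 - (ls + u)‖ = ‖(lam0 - ls) - u‖ := by abel_nf
          _ ≤ ‖lam0 - ls‖ + ‖u‖ := norm_sub_le _ _
          _ = ‖lam0 - ls‖ + 1 := by rw [hun]
      have hsq : ‖lam0 - (ls + u)‖ ^ 2 ≤ (‖lam0 - ls‖ + 1) ^ 2 := by
        have := norm_nonneg (lam0 - (ls + u))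
        nlinarith
      have h2 : ‖lam0 - (ls + u)‖ ^ 2 / (2 * ρ * K)
          ≤ (‖lam0 - ls‖ + 1) ^ 2 / (2 * ρ * K) := by gcongr
      linarith
  refine ⟨hC1, ?_⟩
  have hCS : |(inner ℝ ls r : ℝ)| ≤ ‖ls‖ * ‖r‖ := abs_real_inner_le_norm ls r
  have hup := hxbar ls
  have hbd : ‖ls‖ * ‖r‖ ≤ ‖ls‖ * ((1 / (2 * ρ) * (‖lam0 - ls‖ + 1) ^ 2) / K) :=
    mul_le_mul_of_nonneg_left hC1 (norm_nonneg _)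
  have hC2 : ‖lam0 - ls‖ ^ 2 / (2 * ρ * K) = (‖lam0 - ls‖ ^ 2 / (2 * ρ)) / K := by
    field_simp
  have hC2nn : 0 ≤ (‖lam0 - ls‖ ^ 2 / (2 * ρ)) / K := by positivity
  rw [add_div, mul_div_assoc, abs_le]
  have hlo := neg_abs_le (inner ℝ ls r : ℝ)
  have hhi := le_abs_self (inner ℝ ls r : ℝ)
  rw [hC2] at hup
  constructor <;> [linarith; linarith]
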